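/- Let G and H be connected simple graphs, each of order at least two. Then the mobile general position number of the Cartesian product satisfies mob(G □ H) ≥ max{mob(G), mob(H)}. -/

import Mathlib

open SimpleGraph

/-- `S` is a general position set of `G`: for all `u, v ∈ S`, every shortest `u,v`-path
contains no vertex of `S` other than `u` and `v`. -/
def IsGPSet {V : Type*} (G : SimpleGraph V) (S : Set V) : Prop :=
  ∀ u ∈ S, ∀ v ∈ S, ∀ p : G.Walk u v, p.IsPath → p.length = G.dist u v →
    ∀ w ∈ p.support, w ∈ S → w = u ∨ w = v

/-- A legal move from the configuration `S` to the configuration `T`: a robot at `u ∈ S`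
moves to an adjacent unoccupied vertex `v ∉ S` so that the resulting configuration
`(S \ {u}) ∪ {v}` is again a general position set. -/
def LegalMove {V : Type*} (G : SimpleGraph V) (S T : Set V) : Prop :=
  IsGPSet G S ∧ ∃ u ∈ S, ∃ v, v ∉ S ∧ G.Adj u v ∧
    T = insert v (S \ {u}) ∧ IsGPSet G T

/-- `S` is a mobile general position set: there is a finite sequence of configurations
`S = S_0, S_1, …, S_k`, each obtained from the previous one by a legal move, whose union
is the whole vertex set. -/
def IsMobileGPSet {V : Type*} (G : SimpleGraph V) (S : Set V) : Prop :=
  IsGPSet G S ∧ ∃ (k : ℕ) (f : ℕ → Set V), f 0 = S ∧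
    (∀ i < k, LegalMove G (f i) (f (i + 1))) ∧
    (⋃ i ∈ Set.Iic k, f i) = Set.univ

/-- The mobile general position number of `G`: the maximum cardinality of a mobile
general position set. -/
noncomputable def mob {V : Type*} (G : SimpleGraph V) : ℕ :=
  sSup {n | ∃ S : Set V, IsMobileGPSet G S ∧ S.ncard = n}

namespace MobAux

/-! ### metric characterization of general position -/

def MGP {V : Type*} (G : SimpleGraph V) (S : Set V) : Prop :=
  ∀ u ∈ S, ∀ v ∈ S, ∀ w ∈ S, G.dist u w + G.dist w v = G.dist u v → w = u ∨ w = v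

variable {V W : Type*} {G : SimpleGraph V} {H : SimpleGraph W} {S T : Set V}

lemma MGP.isGPSet (hc : G.Connected) (hS : MGP G S) : IsGPSet G S := by
  classical
  intro u hu v hv p hp hlen w hw hwS
  have h1 : G.dist u w ≤ (p.takeUntil w hw).length := dist_le _
  have h2 : G.dist w v ≤ (p.dropUntil w hw).length := dist_le _
  have h3 : (p.takeUntil w hw).length + (p.dropUntil w hw).length = p.length := by
    have := congrArg Walk.length (p.take_spec hw)
    rwa [Walk.length_append] at this
  have tri := hc.dist_triangle (u := u) (v := w) (w := v)
  exact hS u hu v hv w hwS (by omega)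

lemma isGPSet_mgp (hc : G.Connected) (hS : IsGPSet G S) : MGP G S := by
  intro u hu v hv w hw heq
  obtain ⟨p, hp⟩ := hc.exists_walk_length_eq_dist u w
  obtain ⟨q, hq⟩ := hc.exists_walk_length_eq_dist w v
  have hlen : (p.append q).length = G.dist u v := by
    rw [Walk.length_append, hp, hq, heq]
  have hpath := Walk.isPath_of_length_eq_dist _ hlen
  have hmem : w ∈ (p.append q).support := by
    rw [Walk.mem_support_append_iff]
    exact Or.inl (Walk.end_mem_support p)
  exact hS u hu v hv (p.append q) hpath hlen w hmem hw

/-! ### distance in the box product -/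

lemma boxProd_dist_ge : ∀ {x y : V × W} (p : (G □ H).Walk x y),
    G.Connected → H.Connected →
    G.dist x.1 y.1 + H.dist x.2 y.2 ≤ p.length := by
  intro x y p
  induction p with
  | nil => simp
  | cons h p ih =>
    intro hG hH
    rename_i a b c
    rw [Walk.length_cons]
    have ihh := ih hG hH
    rcases (boxProd_adj.mp h) with ⟨h1, h2⟩ | ⟨h1, h2⟩
    · have t := hG.dist_triangle (u := a.1) (v := b.1) (w := c.1)
      have h3 : G.dist a.1 b.1 ≤ 1 := le_of_eq (dist_eq_one_iff_adj.mpr h1)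
      rw [h2]
      omega
    · have t := hH.dist_triangle (u := a.2) (v := b.2) (w := c.2)
      have h3 : H.dist a.2 b.2 ≤ 1 := le_of_eq (dist_eq_one_iff_adj.mpr h1)
      rw [h2]
      omega

lemma boxProd_dist (hG : G.Connected) (hH : H.Connected) (x y : V × W) :
    (G □ H).dist x y = G.dist x.1 y.1 + H.dist x.2 y.2 := by
  refine le_antisymm ?_ ?_
  · obtain ⟨p, hp⟩ := hG.exists_walk_length_eq_dist x.1 y.1
    obtain ⟨q, hq⟩ := hH.exists_walk_length_eq_dist x.2 y.2
    have := dist_le ((p.boxProdLeft H x.2).append (q.boxProdRight G y.1))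
    have e1 : (p.boxProdLeft H x.2).length = p.length := Walk.length_map _ _
    have e2 : (q.boxProdRight G y.1).length = q.length := Walk.length_map _ _
    rw [Walk.length_append, e1, e2, hp, hq] at this
    simpa using this
  · obtain ⟨p, hp⟩ := ((hG.boxProd hH).exists_walk_length_eq_dist x y)
    have := boxProd_dist_ge p hG hH
    simpa [hp] using this

/-! ### layers -/

def lift {V W : Type*} (h : W) (A : Set V) : Set (V × W) := (fun a => (a, h)) '' A

lemma mem_lift {h : W} {A : Set V} {x : V × W} : x ∈ lift h A ↔ x.1 ∈ A ∧ x.2 = h := by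
  constructor
  · rintro ⟨a, ha, rfl⟩; exact ⟨ha, rfl⟩
  · rintro ⟨h1, h2⟩; exact ⟨x.1, h1, by rw [← h2]⟩

lemma lift_empty (h : W) : lift h (∅ : Set V) = ∅ := by
  ext x; simp [mem_lift]

lemma ncard_lift (h : W) (A : Set V) : (lift h A).ncard = A.ncard :=
  Set.ncard_image_of_injective _ (fun a b hab => congrArg Prod.fst hab)

lemma mgp_split (hG : G.Connected) (hH : H.Connected) (hS : MGP G S)
    {A B : Set V} (hA : A ⊆ S) (hB : B ⊆ S) (hAB : Disjoint A B) (h h' : W) :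
    MGP (G □ H) (lift h A ∪ lift h' B) := by
  have key : ∀ x ∈ lift h A ∪ lift (V := V) h' B, ∀ y ∈ lift h A ∪ lift h' B,
      x.1 = y.1 → x = y := by
    rintro x hx y hy hxy
    rcases hx with hx | hx <;> rcases hy with hy | hy <;>
      rw [mem_lift] at hx hy
    · exact Prod.ext hxy (hx.2.trans hy.2.symm)
    · exact absurd (hxy ▸ hx.1) (Set.disjoint_left.mp hAB · hy.1)
    · exact absurd (hxy ▸ hy.1) (Set.disjoint_left.mp hAB · hx.1)
    · exact Prod.ext hxy (hx.2.trans hy.2.symm)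
  have mem1 : ∀ x ∈ lift h A ∪ lift (V := V) h' B, x.1 ∈ S := by
    rintro x (hx | hx) <;> rw [mem_lift] at hx
    exacts [hA hx.1, hB hx.1]
  intro u hu v hv w hw heq
  rw [boxProd_dist hG hH, boxProd_dist hG hH, boxProd_dist hG hH] at heq
  have t1 := hG.dist_triangle (u := u.1) (v := w.1) (w := v.1)
  have t2 := hH.dist_triangle (u := u.2) (v := w.2) (w := v.2)
  have hGeq : G.dist u.1 w.1 + G.dist w.1 v.1 = G.dist u.1 v.1 := by omega
  rcases hS u.1 (mem1 u hu) v.1 (mem1 v hv) w.1 (mem1 w hw) hGeq with h1 | h1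
  · exact Or.inl (key w hw u hu h1)
  · exact Or.inr (key w hw v hv h1)

lemma isGPSet_split (hG : G.Connected) (hH : H.Connected) (hS : IsGPSet G S)
    {A B : Set V} (hA : A ⊆ S) (hB : B ⊆ S) (hAB : Disjoint A B) (h h' : W) :
    IsGPSet (G □ H) (lift h A ∪ lift h' B) :=
  (mgp_split hG hH (isGPSet_mgp hG hS) hA hB hAB h h').isGPSet (hG.boxProd hH)

lemma isGPSet_lift (hG : G.Connected) (hH : H.Connected) (hS : IsGPSet G S) (h : W) :
    IsGPSet (G □ H) (lift h S) := by
  have := isGPSet_split hG hH hS (le_refl S) (Set.empty_subset S)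
    (Set.disjoint_right.mpr (by simp)) h h
  simpa [lift_empty] using this

/-! ### moves and sequences -/

lemma legalMove_symm (hST : LegalMove G S T) : LegalMove G T S := by
  obtain ⟨hS, u, hu, v, hv, hadj, rfl, hT⟩ := hST
  refine ⟨hT, v, Set.mem_insert _ _, u, ?_, hadj.symm, ?_, hS⟩
  · intro hmem
    rcases Set.mem_insert_iff.mp hmem with rfl | hmem'
    · exact hv hu
    · exact hmem'.2 rfl
  · ext x
    simp only [Set.mem_insert_iff, Set.mem_diff, Set.mem_singleton_iff]
    constructor
    · intro hx
      rcases eq_or_ne x u with rfl | hxu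
      · exact Or.inl rfl
      · exact Or.inr ⟨Or.inr ⟨hx, hxu⟩, fun e => hv (e ▸ hx)⟩
    · rintro (rfl | ⟨(rfl | ⟨h1, _⟩), _⟩)
      · exact hu
      · tauto
      · exact h1

def MSeq {V : Type*} (G : SimpleGraph V) (k : ℕ) (f : ℕ → Set V) : Prop :=
  ∀ i < k, LegalMove G (f i) (f (i + 1))

def comb {V : Type*} (k : ℕ) (f g : ℕ → Set V) : ℕ → Set V :=
  fun i => if i ≤ k then f i else g (i - k)

lemma comb_le {k i : ℕ} {f g : ℕ → Set V} (h : i ≤ k) : comb k f g i = f i := by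
  simp only [comb, if_pos h]

lemma comb_gt {k i : ℕ} {f g : ℕ → Set V} (h : k < i) : comb k f g i = g (i - k) := by
  simp only [comb, if_neg (by omega : ¬ i ≤ k)]

lemma comb_mseq {k l : ℕ} {f g : ℕ → Set V} (hf : MSeq G k f) (hg : MSeq G l g)
    (hlink : f k = g 0) : MSeq G (k + l) (comb k f g) := by
  intro i hi
  rcases lt_or_ge i k with h | h
  · rw [comb_le (le_of_lt h), comb_le h]
    exact hf i h
  · have e1 : comb k f g i = g (i - k) := by
      rcases eq_or_lt_of_le h with hh | hh
      · rw [comb_le (le_of_eq hh.symm), ← hh, Nat.sub_self, ← hlink]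
      · exact comb_gt hh
    have e2 : comb k f g (i + 1) = g (i - k + 1) := by
      rw [comb_gt (show k < i + 1 by omega), show i + 1 - k = i - k + 1 by omega]
    rw [e1, e2]
    exact hg (i - k) (by omega)

lemma comb_zero {k : ℕ} {f g : ℕ → Set V} : comb k f g 0 = f 0 := comb_le (Nat.zero_le k)

lemma comb_last {k l : ℕ} {f g : ℕ → Set V} (hlink : f k = g 0) :
    comb k f g (k + l) = g l := by
  rcases Nat.eq_zero_or_pos l with rfl | hl
  · rw [Nat.add_zero, comb_le le_rfl, hlink]
  · rw [comb_gt (show k < k + l by omega), show k + l - k = l by omega]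

lemma comb_union {k l : ℕ} {f g : ℕ → Set V} (hlink : f k = g 0) :
    (⋃ i ∈ Set.Iic (k + l), comb k f g i) =
      (⋃ i ∈ Set.Iic k, f i) ∪ (⋃ i ∈ Set.Iic l, g i) := by
  ext x
  simp only [Set.mem_iUnion, Set.mem_Iic, Set.mem_union, exists_prop]
  constructor
  · rintro ⟨i, hi, hx⟩
    rcases le_or_gt i k with h | h
    · exact Or.inl ⟨i, h, by rwa [comb_le h] at hx⟩
    · exact Or.inr ⟨i - k, by omega, by rwa [comb_gt h] at hx⟩
  · rintro (⟨i, hi, hx⟩ | ⟨i, hi, hx⟩)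
    · exact ⟨i, by omega, by rwa [comb_le hi]⟩
    · rcases Nat.eq_zero_or_pos i with rfl | hipos
      · exact ⟨k, by omega, by rwa [comb_le le_rfl, hlink]⟩
      · exact ⟨k + i, by omega, by rw [comb_gt (by omega)]; simpa using hx⟩

lemma legalMove_lift (hG : G.Connected) (hH : H.Connected) (hmv : LegalMove G S T) (h : W) :
    LegalMove (G □ H) (lift h S) (lift h T) := by
  obtain ⟨hS, u, hu, v, hv, hadj, rfl, hT⟩ := hmv
  refine ⟨isGPSet_lift hG hH hS h, (u, h), mem_lift.mpr ⟨hu, rfl⟩, (v, h), ?_,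
    boxProd_adj_left.mpr hadj, ?_, isGPSet_lift hG hH hT h⟩
  · intro hmem
    exact hv (mem_lift.mp hmem).1
  · ext ⟨a, b⟩
    simp only [mem_lift, Set.mem_insert_iff, Set.mem_diff, Set.mem_singleton_iff,
      Prod.ext_iff]
    constructor
    · rintro ⟨(rfl | ⟨haS, hau⟩), rfl⟩
      · exact Or.inl ⟨rfl, rfl⟩
      · exact Or.inr ⟨⟨haS, rfl⟩, fun hh => hau hh.1⟩
    · rintro (⟨rfl, rfl⟩ | ⟨⟨haS, rfl⟩, hne⟩)
      · exact ⟨Or.inl rfl, rfl⟩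
      · refine ⟨Or.inr ⟨haS, fun hh => hne ⟨hh, rfl⟩⟩, rfl⟩

/-! ### layer run: sweep a layer and come back -/

lemma layer_run (hG : G.Connected) (hH : H.Connected) {k : ℕ} {f : ℕ → Set V}
    (hf : MSeq G k f) (h : W) :
    ∃ m F, F 0 = lift h (f 0) ∧ MSeq (G □ H) m F ∧ F m = lift h (f 0) ∧
      ∀ i ≤ k, lift h (f i) ⊆ ⋃ j ∈ Set.Iic m, F j := by
  refine ⟨2 * k, fun i => lift h (f (if i ≤ k then i else 2 * k - i)), by simp, ?_, ?_, ?_⟩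
  · intro i hi
    beta_reduce
    rcases lt_or_ge i k with hik | hik
    · have e1 : (if i ≤ k then i else 2 * k - i) = i := if_pos (by omega)
      have e2 : (if i + 1 ≤ k then i + 1 else 2 * k - (i + 1)) = i + 1 := if_pos (by omega)
      rw [e1, e2]
      exact legalMove_lift hG hH (hf i hik) h
    · have e1 : (if i ≤ k then i else 2 * k - i) = 2 * k - i := by
        rcases eq_or_lt_of_le hik with hh | hh
        · rw [if_pos (le_of_eq hh.symm), ← hh]; omega
        · exact if_neg (by omega)
      have e2 : (if i + 1 ≤ k then i + 1 else 2 * k - (i + 1)) = 2 * k - i - 1 := by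
        rw [if_neg (by omega)]; omega
      rw [e1, e2]
      have hmv := legalMove_symm (hf (2 * k - i - 1) (by omega))
      have e3 : 2 * k - i - 1 + 1 = 2 * k - i := by omega
      rw [e3] at hmv
      exact legalMove_lift hG hH hmv h
  · have h0 : (if 2 * k ≤ k then 2 * k else 2 * k - 2 * k) = 0 := by
      rcases Nat.eq_zero_or_pos k with rfl | hk
      · simp
      · rw [if_neg (by omega)]; omega
    show lift h (f (if 2 * k ≤ k then 2 * k else 2 * k - 2 * k)) = lift h (f 0)
    rw [h0]
  · intro i hik
    intro x hx
    simp only [Set.mem_iUnion, Set.mem_Iic, exists_prop]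
    refine ⟨i, by omega, ?_⟩
    show x ∈ lift h (f (if i ≤ k then i else 2 * k - i))
    rwa [if_pos hik]

/-! ### migration between adjacent layers -/

lemma migration [Finite V] (hG : G.Connected) (hH : H.Connected) (hS : IsGPSet G S)
    {h h' : W} (hadj : H.Adj h h') :
    ∃ m F, F 0 = lift h S ∧ MSeq (G □ H) m F ∧ F m = lift h' S := by
  classical
  have hfin : S.Finite := Set.toFinite S
  set l : List V := hfin.toFinset.toList with hl
  have hmem : ∀ x, x ∈ l ↔ x ∈ S := by
    intro x
    rw [hl, Finset.mem_toList, Set.Finite.mem_toFinset]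
  have hnd : l.Nodup := Finset.nodup_toList _
  refine ⟨l.length,
    fun j => lift h (S \ {x | x ∈ l.take j}) ∪ lift h' {x | x ∈ l.take j}, ?_, ?_, ?_⟩
  · simp only [List.take_zero]
    have : {x : V | x ∈ ([] : List V)} = ∅ := by ext x; simp
    rw [this, lift_empty, Set.union_empty, Set.diff_empty]
  · intro j hj
    have htakeL : l.take (j + 1) = (l.take j).concat (l[j]'hj) := (List.take_concat_get hj).symm
    set u : V := l[j]'hj with hu
    have hus : u ∈ S := (hmem u).mp (List.getElem_mem hj)
    have hnotin : u ∉ l.take j := by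
      have h1 : (l.take (j + 1)).Nodup := (List.take_sublist _ _).nodup hnd
      rw [htakeL, List.concat_eq_append] at h1
      have := List.disjoint_of_nodup_append h1
      intro hmem'
      exact this hmem' (List.mem_singleton_self u)
    have htake : {x : V | x ∈ l.take (j + 1)} = insert u {x | x ∈ l.take j} := by
      ext x
      simp only [Set.mem_setOf_eq, htakeL, List.concat_eq_append, List.mem_append,
        List.mem_singleton, Set.mem_insert_iff]
      tauto
    have hTsub : {x : V | x ∈ l.take j} ⊆ S := by
      intro x hx
      exact (hmem x).mp (List.mem_of_mem_take hx)
    have hTsub' : {x : V | x ∈ l.take (j+1)} ⊆ S := by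
      intro x hx
      exact (hmem x).mp (List.mem_of_mem_take hx)
    have hne : h ≠ h' := hadj.ne
    refine ⟨isGPSet_split hG hH hS Set.diff_subset hTsub Set.disjoint_sdiff_left h h',
      (u, h), ?_, (u, h'), ?_, boxProd_adj_right.mpr hadj, ?_,
      isGPSet_split hG hH hS Set.diff_subset hTsub' Set.disjoint_sdiff_left h h'⟩
    · exact Or.inl (mem_lift.mpr ⟨⟨hus, hnotin⟩, rfl⟩)
    · rintro (hm | hm) <;> rw [mem_lift] at hm
      · exact hne hm.2.symm
      · exact hnotin hm.1
    · ext ⟨a, b⟩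
      have hTaS : a ∈ l.take j → a ∈ S := fun hx => hTsub hx
      simp only [htake, Set.mem_union, mem_lift, Set.mem_insert_iff, Set.mem_diff,
        Set.mem_singleton_iff, Set.mem_setOf_eq, Prod.ext_iff, not_or, not_and]
      constructor
      · intro hx
        tauto
      · intro hx
        tauto
  · show lift h (S \ {x | x ∈ l.take l.length}) ∪ lift h' {x | x ∈ l.take l.length} = lift h' S
    rw [List.take_length]
    have h1 : {x : V | x ∈ l} = S := by ext x; simp [hmem]
    rw [h1, Set.diff_self, lift_empty, Set.empty_union]

/-! ### covering along a walk in H -/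

lemma walk_cover [Finite V] (hG : G.Connected) (hH : H.Connected) {S : Set V}
    (hS : IsGPSet G S)
    {k : ℕ} {f : ℕ → Set V} (hf0 : f 0 = S) (hf : MSeq G k f)
    (hcov : (⋃ i ∈ Set.Iic k, f i) = Set.univ) :
    ∀ {h h' : W} (q : H.Walk h h'), ∃ m F, F 0 = lift h S ∧ MSeq (G □ H) m F ∧
      F m = lift h' S ∧ ∀ (x : V), ∀ y ∈ q.support, (x, y) ∈ ⋃ i ∈ Set.Iic m, F i := by
  intro h h' q
  induction q with
  | nil =>
    rename_i d
    obtain ⟨m, F, hF0, hFm, hFl, hcover⟩ := layer_run (H := H) hG hH hf d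
    refine ⟨m, F, by rw [hF0, hf0], hFm, by rw [hFl, hf0], ?_⟩
    intro x y hy
    simp only [Walk.support_nil, List.mem_singleton] at hy
    have hx : x ∈ ⋃ i ∈ Set.Iic k, f i := by rw [hcov]; trivial
    simp only [Set.mem_iUnion, Set.mem_Iic, exists_prop] at hx
    obtain ⟨i, hik, hxi⟩ := hx
    exact hcover i hik (mem_lift.mpr ⟨hxi, hy⟩)
  | cons hadj q ih =>
    rename_i a b c
    obtain ⟨m1, F1, hF10, hF1s, hF1l, hcover1⟩ := layer_run (H := H) hG hH hf a
    obtain ⟨m2, F2, hF20, hF2s, hF2l⟩ := migration (H := H) hG hH hS hadj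
    obtain ⟨m3, F3, hF30, hF3s, hF3l, hcover3⟩ := ih
    rw [hf0] at hF10 hF1l
    have link1 : F1 m1 = F2 0 := by rw [hF1l, hF20]
    have link2 : comb m1 F1 F2 (m1 + m2) = F3 0 := by rw [comb_last link1, hF2l, hF30]
    refine ⟨m1 + m2 + m3, comb (m1 + m2) (comb m1 F1 F2) F3, ?_, ?_, ?_, ?_⟩
    · rw [comb_zero, comb_zero, hF10]
    · exact comb_mseq (comb_mseq hF1s hF2s link1) hF3s link2
    · rw [comb_last link2, hF3l]
    · intro x y hy
      rw [Walk.support_cons, List.mem_cons] at hy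
      rw [comb_union link2, comb_union link1]
      rcases hy with rfl | hy
      · left; left
        have hx : x ∈ ⋃ i ∈ Set.Iic k, f i := by rw [hcov]; trivial
        simp only [Set.mem_iUnion, Set.mem_Iic, exists_prop] at hx
        obtain ⟨i, hik, hxi⟩ := hx
        exact hcover1 i hik (mem_lift.mpr ⟨hxi, rfl⟩)
      · right
        exact hcover3 x y hy

/-! ### a walk visiting every vertex -/

lemma exists_walk_through (hH : H.Connected) (l : List W) (a : W) :
    ∃ (b : W) (q : H.Walk a b), ∀ x ∈ l, x ∈ q.support := by
  induction l with
  | nil => exact ⟨a, Walk.nil, by simp⟩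
  | cons x xs ih =>
    obtain ⟨b, q, hq⟩ := ih
    obtain ⟨r⟩ := hH.preconnected b x
    refine ⟨x, q.append r, ?_⟩
    intro y hy
    rw [Walk.mem_support_append_iff]
    rcases List.mem_cons.mp hy with rfl | hy
    · exact Or.inr (Walk.end_mem_support r)
    · exact Or.inl (hq y hy)

lemma exists_walk_all [Finite W] (hH : H.Connected) (a : W) :
    ∃ (b : W) (q : H.Walk a b), ∀ x : W, x ∈ q.support := by
  have : Fintype W := Fintype.ofFinite W
  obtain ⟨b, q, hq⟩ := exists_walk_through hH (Finset.univ : Finset W).toList a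
  exact ⟨b, q, fun x => hq x (by simp)⟩

/-! ### the key lemma -/

lemma bddAbove_mob_set {V : Type*} [Finite V] (G : SimpleGraph V) :
    BddAbove {n | ∃ S : Set V, IsMobileGPSet G S ∧ S.ncard = n} := by
  refine ⟨Nat.card V, ?_⟩
  rintro n ⟨S, _, rfl⟩
  calc S.ncard ≤ (Set.univ : Set V).ncard :=
        Set.ncard_le_ncard (Set.subset_univ S) (Set.toFinite _)
    _ = Nat.card V := Set.ncard_univ V

lemma key [Finite V] [Finite W] (hG : G.Connected) (hH : H.Connected) :
    mob G ≤ mob (G □ H) := by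
  rcases Set.eq_empty_or_nonempty {n | ∃ S : Set V, IsMobileGPSet G S ∧ S.ncard = n}
    with he | hne
  · rw [mob, he, csSup_empty]
    exact Nat.zero_le _
  refine csSup_le hne ?_
  rintro n ⟨S, ⟨hS, k, f, hf0, hf, hcov⟩, rfl⟩
  have hWne : Nonempty W := hH.nonempty
  obtain ⟨h₀⟩ := hWne
  obtain ⟨b, q, hq⟩ := exists_walk_all hH h₀
  obtain ⟨m, F, hF0, hFs, hFl, hcover⟩ := walk_cover hG hH hS hf0 hf hcov q
  have hmobile : IsMobileGPSet (G □ H) (lift h₀ S) := by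
    refine ⟨isGPSet_lift hG hH hS h₀, m, F, hF0, hFs, ?_⟩
    rw [Set.eq_univ_iff_forall]
    rintro ⟨x, y⟩
    exact hcover x y (hq y)
  have hmem : S.ncard ∈ {n | ∃ T : Set (V × W), IsMobileGPSet (G □ H) T ∧ T.ncard = n} :=
    ⟨lift h₀ S, hmobile, ncard_lift h₀ S⟩
  exact le_csSup (bddAbove_mob_set _) hmem

/-! ### swapping coordinates -/

lemma swap_adj {x y : W × V} :
    (G □ H).Adj (Prod.swap x) (Prod.swap y) ↔ (H □ G).Adj x y := by
  simp only [boxProd_adj, Prod.fst_swap, Prod.snd_swap]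
  tauto

lemma swap_isGPSet (hG : G.Connected) (hH : H.Connected) {T : Set (W × V)}
    (hT : IsGPSet (H □ G) T) : IsGPSet (G □ H) (Prod.swap '' T) := by
  have hm := isGPSet_mgp (hH.boxProd hG) hT
  refine MGP.isGPSet (hG.boxProd hH) ?_
  rintro u ⟨u', hu', rfl⟩ v ⟨v', hv', rfl⟩ w ⟨w', hw', rfl⟩ heq
  rw [boxProd_dist hG hH, boxProd_dist hG hH, boxProd_dist hG hH] at heq
  have heq' : (H □ G).dist u' w' + (H □ G).dist w' v' = (H □ G).dist u' v' := by
    rw [boxProd_dist hH hG, boxProd_dist hH hG, boxProd_dist hH hG]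
    simp only [Prod.fst_swap, Prod.snd_swap] at heq
    omega
  rcases hm u' hu' v' hv' w' hw' heq' with rfl | rfl
  · exact Or.inl rfl
  · exact Or.inr rfl

lemma swap_legalMove (hG : G.Connected) (hH : H.Connected) {S T : Set (W × V)}
    (hmv : LegalMove (H □ G) S T) :
    LegalMove (G □ H) (Prod.swap '' S) (Prod.swap '' T) := by
  obtain ⟨hS, u, hu, v, hv, hadj, rfl, hT⟩ := hmv
  refine ⟨swap_isGPSet hG hH hS, Prod.swap u, ⟨u, hu, rfl⟩, Prod.swap v, ?_,
    swap_adj.mpr hadj, ?_, swap_isGPSet hG hH hT⟩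
  · rintro ⟨v', hv', hvv⟩
    exact hv (Prod.swap_injective hvv ▸ hv')
  · rw [Set.image_insert_eq, Set.image_diff Prod.swap_injective, Set.image_singleton]

lemma mob_swap_le [Finite V] [Finite W] (hG : G.Connected) (hH : H.Connected) :
    mob (H □ G) ≤ mob (G □ H) := by
  rcases Set.eq_empty_or_nonempty
    {n | ∃ S : Set (W × V), IsMobileGPSet (H □ G) S ∧ S.ncard = n} with he | hne
  · rw [mob, he, csSup_empty]
    exact Nat.zero_le _
  refine csSup_le hne ?_
  rintro n ⟨S, ⟨hS, k, f, hf0, hf, hcov⟩, rfl⟩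
  have hmem : S.ncard ∈ {n | ∃ T : Set (V × W), IsMobileGPSet (G □ H) T ∧ T.ncard = n} := by
    refine ⟨Prod.swap '' S, ⟨swap_isGPSet hG hH hS, k, fun i => Prod.swap '' f i, ?_, ?_, ?_⟩,
      Set.ncard_image_of_injective _ Prod.swap_injective⟩
    · show Prod.swap '' f 0 = Prod.swap '' S
      rw [hf0]
    · intro i hi
      exact swap_legalMove hG hH (hf i hi)
    · show (⋃ i ∈ Set.Iic k, Prod.swap '' f i) = Set.univ
      have h2 : (⋃ i ∈ Set.Iic k, Prod.swap '' f i) = Prod.swap '' ⋃ i ∈ Set.Iic k, f i := by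
        rw [Set.image_iUnion₂]
      rw [h2, hcov, Set.image_univ, Set.range_eq_univ.mpr Prod.swap_surjective]
  exact le_csSup (bddAbove_mob_set _) hmem

end MobAux

theorem mob_boxProd_ge_max_mob {V W : Type*} [Finite V] [Finite W]
    (G : SimpleGraph V) (H : SimpleGraph W)
    (hG : G.Connected) (hH : H.Connected)
    (hV : 2 ≤ Nat.card V) (hW : 2 ≤ Nat.card W) :
    max (mob G) (mob H) ≤ mob (G □ H) :=
  max_le (MobAux.key hG hH) (le_trans (MobAux.key hH hG) (MobAux.mob_swap_le hG hH))
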